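/- In the setting of a surjective partition map φ : Fin n → J with parts I_j := φ⁻¹(j) and K_i := {j ∈ J : |I_j| = i}, let Stab ≤ Perm(Fin n) be the subgroup of permutations σ such that for every j ∈ J there is j′ ∈ J with σ(I_j) = I_{j′}. The subgroup N := {σ ∈ Perm(Fin n) : σ(I_j) = I_j for all j ∈ J}, which is isomorphic to ∏_{j ∈ J} Perm(I_j), is a normal subgroup of Stab, and the quotient Stab / N is isomorphic to ∏_{i ≥ 1} Perm(K_i). -/

import Mathlib

/-- Let `φ : Fin n → J` be a surjective partition map with parts `I_j = φ⁻¹ {j}` and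
`K_i = {j ∈ J : |I_j| = i}`, and let `Stab ≤ Perm (Fin n)` be the subgroup of
permutations mapping every part onto a part.  The subgroup
`N = {σ : σ (I_j) = I_j for all j}`, which is isomorphic to `∏_{j ∈ J} Perm (I_j)`,
is normal in `Stab`, and the quotient `Stab / N` is isomorphic to
`∏_{i ≥ 1} Perm (K_i)`. -/
theorem stmt_8 {n : ℕ} (hn : 1 ≤ n) {J : Type*} [Fintype J] [DecidableEq J]
    (φ : Fin n → J) (hφ : Function.Surjective φ)
    (Stab : Subgroup (Equiv.Perm (Fin n)))
    (hStab : (Stab : Set (Equiv.Perm (Fin n)))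
        = {σ : Equiv.Perm (Fin n) |
            ∀ j : J, ∃ j' : J, ⇑σ '' (φ ⁻¹' {j}) = φ ⁻¹' {j'}})
    (N : Subgroup Stab)
    (hN : (N : Set Stab)
        = {σ : Stab | ∀ j : J,
            ⇑(σ : Equiv.Perm (Fin n)) '' (φ ⁻¹' {j}) = φ ⁻¹' {j}}) :
    Nonempty (N ≃* ∀ j : J, Equiv.Perm {a : Fin n // φ a = j}) ∧
      ∃ h : N.Normal,
        Nonempty (letI : N.Normal := h
          ((Stab ⧸ N) ≃* ∀ i : {i : ℕ // 1 ≤ i},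
            Equiv.Perm {j : J // Nat.card (φ ⁻¹' {j}) = (i : ℕ)})) := by
  classical
  have hStab' : ∀ σ : Equiv.Perm (Fin n), σ ∈ Stab ↔
      ∀ j : J, ∃ j' : J, ⇑σ '' (φ ⁻¹' {j}) = φ ⁻¹' {j'} := by
    intro σ
    rw [← SetLike.mem_coe, hStab]; rfl
  have hN' : ∀ σ : Stab, σ ∈ N ↔
      ∀ j : J, ⇑(σ : Equiv.Perm (Fin n)) '' (φ ⁻¹' {j}) = φ ⁻¹' {j} := by
    intro σ
    rw [← SetLike.mem_coe, hN]; rfl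
  -- the fiber-preservation criterion for elements of N
  have hiff : ∀ (σ : N) (j : J) (x : Fin n),
      φ x = j ↔ φ (((σ : Stab) : Equiv.Perm (Fin n)) x) = j := by
    intro σ j x
    have h := (hN' σ.1).mp σ.2 j
    constructor
    · intro hx
      have : ((σ : Stab) : Equiv.Perm (Fin n)) x ∈
          ⇑((σ : Stab) : Equiv.Perm (Fin n)) '' (φ ⁻¹' {j}) := ⟨x, hx, rfl⟩
      rw [h] at this; exact this
    · intro hx
      have hmem : ((σ : Stab) : Equiv.Perm (Fin n)) x ∈ φ ⁻¹' {j} := hx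
      rw [← h] at hmem
      obtain ⟨y, hy, hyx⟩ := hmem
      have := ((σ : Stab) : Equiv.Perm (Fin n)).injective hyx
      rwa [this] at hy
  let A : N →* ∀ j : J, Equiv.Perm {a : Fin n // φ a = j} :=
    { toFun := fun σ j => Equiv.Perm.subtypePerm ((σ : Stab) : Equiv.Perm (Fin n))
        (fun x => (hiff σ j x).symm)
      map_one' := by
        funext j; apply Equiv.ext; intro x; apply Subtype.ext; rfl
      map_mul' := by
        intro σ τ; funext j; apply Equiv.ext; intro x; apply Subtype.ext; rfl }
  have hAapp : ∀ (σ : N) (j : J) (x : {a : Fin n // φ a = j}),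
      ((A σ j x : {a : Fin n // φ a = j}) : Fin n)
        = ((σ : Stab) : Equiv.Perm (Fin n)) x := fun _ _ _ => rfl
  have hinj : Function.Injective A := by
    intro σ τ h
    apply Subtype.ext; apply Subtype.ext; apply Equiv.ext; intro x
    have h1 := congrFun h (φ x)
    have h2 := congrArg (fun e : Equiv.Perm {a : Fin n // φ a = φ x} =>
      ((e ⟨x, rfl⟩ : {a : Fin n // φ a = φ x}) : Fin n)) h1
    exact h2
  have hsurj : Function.Surjective A := by
    intro π
    let σE : Equiv.Perm (Fin n) :=
      (Equiv.sigmaFiberEquiv φ).symm.trans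
        ((Equiv.sigmaCongrRight π).trans (Equiv.sigmaFiberEquiv φ))
    have hσE : ∀ x : Fin n, σE x = ((π (φ x) ⟨x, rfl⟩ : {a : Fin n // φ a = φ x}) : Fin n) :=
      fun x => rfl
    have hφσ : ∀ x, φ (σE x) = φ x := fun x => (π (φ x) ⟨x, rfl⟩).2
    have hφσ' : ∀ x, φ (σE.symm x) = φ x := by
      intro x
      conv_rhs => rw [← σE.apply_symm_apply x]
      rw [hφσ]
    have him : ∀ j : J, ⇑σE '' (φ ⁻¹' {j}) = φ ⁻¹' {j} := by
      intro j
      ext b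
      simp only [Set.mem_image, Set.mem_preimage, Set.mem_singleton_iff]
      constructor
      · rintro ⟨a, ha, rfl⟩; rw [hφσ]; exact ha
      · intro hb
        exact ⟨σE.symm b, by rw [hφσ']; exact hb, σE.apply_symm_apply b⟩
    have hmemS : σE ∈ Stab := (hStab' σE).mpr fun j => ⟨j, him j⟩
    refine ⟨⟨⟨σE, hmemS⟩, (hN' _).mpr him⟩, ?_⟩
    funext j
    apply Equiv.ext
    rintro ⟨x, hx⟩
    apply Subtype.ext
    subst hx
    rfl
  refine ⟨⟨MulEquiv.ofBijective A ⟨hinj, hsurj⟩⟩, ?_⟩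
  -- a section of φ
  set s : J → Fin n := fun j => (hφ j).choose with hs_def
  have hs : ∀ j, φ (s j) = j := fun j => (hφ j).choose_spec
  -- distinct fibers
  have fiber_eq : ∀ j j' : J, (φ ⁻¹' {j} : Set (Fin n)) = φ ⁻¹' {j'} → j = j' := by
    intro j j' h
    have h1 : s j ∈ φ ⁻¹' {j} := hs j
    rw [h] at h1
    have : φ (s j) = j' := h1
    rw [hs j] at this; exact this
  -- the induced map on J
  set f : Stab → J → J := fun σ j => φ ((σ : Equiv.Perm (Fin n)) (s j)) with hf_def
  have L1 : ∀ (σ : Stab) (j : J),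
      ⇑(σ : Equiv.Perm (Fin n)) '' (φ ⁻¹' {j}) = φ ⁻¹' {f σ j} := by
    intro σ j
    obtain ⟨j', hj'⟩ := (hStab' σ.1).mp σ.2 j
    have h1 : (σ : Equiv.Perm (Fin n)) (s j) ∈
        ⇑(σ : Equiv.Perm (Fin n)) '' (φ ⁻¹' {j}) := ⟨s j, hs j, rfl⟩
    rw [hj'] at h1
    have h2 : f σ j = j' := h1
    rw [h2]; exact hj'
  have L2 : ∀ (σ : Stab) (x : Fin n),
      φ ((σ : Equiv.Perm (Fin n)) x) = f σ (φ x) := by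
    intro σ x
    have : (σ : Equiv.Perm (Fin n)) x ∈
        ⇑(σ : Equiv.Perm (Fin n)) '' (φ ⁻¹' {φ x}) := ⟨x, rfl, rfl⟩
    rw [L1 σ (φ x)] at this
    exact this
  have Linv : ∀ (σ : Stab) (j : J), f σ⁻¹ (f σ j) = j := by
    intro σ j
    have h1 := (L2 σ⁻¹ ((σ : Equiv.Perm (Fin n)) (s j))).symm
    have h2 : ((σ⁻¹ : Stab) : Equiv.Perm (Fin n)) ((σ : Equiv.Perm (Fin n)) (s j)) = s j := by
      rw [InvMemClass.coe_inv]
      exact Equiv.symm_apply_apply _ _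
    rw [h2, hs j] at h1
    exact h1
  -- F : Stab →* Perm J
  let F : Stab →* Equiv.Perm J :=
    { toFun := fun σ =>
        { toFun := f σ
          invFun := f σ⁻¹
          left_inv := fun j => Linv σ j
          right_inv := fun j => by
            have := Linv σ⁻¹ j
            rwa [inv_inv] at this }
      map_one' := by
        apply Equiv.ext; intro j
        show f 1 j = j
        show φ ((1 : Equiv.Perm (Fin n)) (s j)) = j
        exact hs j
      map_mul' := by
        intro σ τ
        apply Equiv.ext; intro j
        show f (σ * τ) j = f σ (f τ j)
        show φ (((σ : Equiv.Perm (Fin n)) * (τ : Equiv.Perm (Fin n))) (s j)) = f σ (f τ j)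
        show φ ((σ : Equiv.Perm (Fin n)) ((τ : Equiv.Perm (Fin n)) (s j))) = f σ (f τ j)
        rw [L2 σ] }
  have hFapp : ∀ (σ : Stab) (j : J), F σ j = f σ j := fun _ _ => rfl
  have hcF : ∀ (σ : Stab) (j : J),
      Nat.card (φ ⁻¹' {F σ j} : Set (Fin n)) = Nat.card (φ ⁻¹' {j} : Set (Fin n)) := by
    intro σ j
    rw [hFapp, ← L1 σ j,
      Nat.card_image_of_injective (σ : Equiv.Perm (Fin n)).injective]
  -- Φ : Stab →* ∏ Perm K_i
  let Φ : Stab →* ∀ i : {i : ℕ // 1 ≤ i},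
      Equiv.Perm {j : J // Nat.card (φ ⁻¹' {j}) = (i : ℕ)} :=
    { toFun := fun σ i => Equiv.Perm.subtypePerm (F σ)
        (fun j => by rw [hcF σ j])
      map_one' := by
        funext i; apply Equiv.ext; intro j; apply Subtype.ext
        show f 1 j.1 = j.1
        show φ ((1 : Equiv.Perm (Fin n)) (s j.1)) = j.1
        exact hs j.1
      map_mul' := by
        intro σ τ
        funext i; apply Equiv.ext; intro j; apply Subtype.ext
        show F (σ * τ) j.1 = F σ (F τ j.1)
        rw [map_mul]
        rfl }
  -- N is the kernel of Φ
  have hNeq : N = Φ.ker := by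
    ext σ
    rw [MonoidHom.mem_ker, hN' σ]
    constructor
    · intro hσ
      funext i
      apply Equiv.ext; intro j; apply Subtype.ext
      show F σ j.1 = j.1
      have h1 := L1 σ j.1
      rw [hσ j.1] at h1
      exact (fiber_eq _ _ h1.symm)
    · intro hσ j
      have hpos : 1 ≤ Nat.card (φ ⁻¹' {j} : Set (Fin n)) := by
        haveI : Nonempty (φ ⁻¹' {j} : Set (Fin n)) := ⟨⟨s j, hs j⟩⟩
        exact Nat.card_pos
      have h1 := congrFun hσ ⟨Nat.card (φ ⁻¹' {j} : Set (Fin n)), hpos⟩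
      have h2 := congrArg (fun e => ((e ⟨j, rfl⟩ :
        {j' : J // Nat.card (φ ⁻¹' {j'} : Set (Fin n)) = Nat.card (φ ⁻¹' {j} : Set (Fin n))})
          : J)) h1
      have h3 : F σ j = j := h2
      rw [L1 σ j]
      rw [show f σ j = j from h3]
  -- Φ is surjective
  have hΦsurj : Function.Surjective Φ := by
    intro κ
    -- extend κ to all of ℕ
    let ρ : ∀ m : ℕ, Equiv.Perm {j : J // Nat.card (φ ⁻¹' {j} : Set (Fin n)) = m} :=
      fun m => if h : 1 ≤ m then κ ⟨m, h⟩ else 1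
    -- combined permutation of J
    let τJ : Equiv.Perm J :=
      (Equiv.sigmaFiberEquiv (fun j : J => Nat.card (φ ⁻¹' {j} : Set (Fin n)))).symm.trans
        ((Equiv.sigmaCongrRight ρ).trans
          (Equiv.sigmaFiberEquiv (fun j : J => Nat.card (φ ⁻¹' {j} : Set (Fin n)))))
    have hτapp : ∀ j : J, τJ j = ((ρ (Nat.card (φ ⁻¹' {j} : Set (Fin n))) ⟨j, rfl⟩ :
        {j' : J // Nat.card (φ ⁻¹' {j'} : Set (Fin n))
          = Nat.card (φ ⁻¹' {j} : Set (Fin n))}) : J) := fun j => rfl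
    have hcτ : ∀ j : J, Nat.card (φ ⁻¹' {τJ j} : Set (Fin n))
        = Nat.card (φ ⁻¹' {j} : Set (Fin n)) :=
      fun j => (ρ (Nat.card (φ ⁻¹' {j} : Set (Fin n))) ⟨j, rfl⟩).2
    -- equivalences between matching fibers
    have hcards : ∀ j : J,
        Fintype.card {a : Fin n // φ a = j} = Fintype.card {a : Fin n // φ a = τJ j} := by
      intro j
      have h1 : Nat.card {a : Fin n // φ a = j} = Nat.card (φ ⁻¹' {j} : Set (Fin n)) := rfl
      have h2 : Nat.card {a : Fin n // φ a = τJ j}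
          = Nat.card (φ ⁻¹' {τJ j} : Set (Fin n)) := rfl
      rw [← Nat.card_eq_fintype_card, ← Nat.card_eq_fintype_card, h1, h2, hcτ]
    let e : ∀ j : J, {a : Fin n // φ a = j} ≃ {a : Fin n // φ a = τJ j} :=
      fun j => Fintype.equivOfCardEq (hcards j)
    -- the permutation of `Fin n`
    let g : Fin n → Fin n := fun x => ((e (φ x) ⟨x, rfl⟩ : {a : Fin n // φ a = τJ (φ x)}) : Fin n)
    have hφg : ∀ x : Fin n, φ (g x) = τJ (φ x) := fun x => (e (φ x) ⟨x, rfl⟩).2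
    have hval : ∀ (j j' : J) (h : j = j') (b : {a : Fin n // φ a = j}),
        ((e j b : {a : Fin n // φ a = τJ j}) : Fin n)
          = ((e j' ⟨b.1, h ▸ b.2⟩ : {a : Fin n // φ a = τJ j'}) : Fin n) := by
      rintro j _ rfl b; rfl
    have hginj : Function.Injective g := by
      intro x y hxy
      have hφxy : φ x = φ y := by
        have := congrArg φ hxy
        rw [hφg, hφg] at this
        exact τJ.injective this
      have h1 := hval (φ x) (φ y) hφxy ⟨x, rfl⟩
      have h2 : e (φ y) ⟨x, hφxy⟩ = e (φ y) ⟨y, rfl⟩ :=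
        Subtype.ext (h1.symm.trans hxy)
      have h3 := (e (φ y)).injective h2
      exact congrArg Subtype.val h3
    let σE : Equiv.Perm (Fin n) := Equiv.ofBijective g (Finite.injective_iff_bijective.mp hginj)
    have hσEapp : ∀ x, σE x = g x := fun x => rfl
    have hφσE : ∀ x, φ (σE x) = τJ (φ x) := fun x => hφg x
    have hφσE' : ∀ x, τJ (φ (σE.symm x)) = φ x := by
      intro x
      conv_rhs => rw [← σE.apply_symm_apply x]
      rw [hφσE]
    have him : ∀ j : J, ⇑σE '' (φ ⁻¹' {j}) = φ ⁻¹' {τJ j} := by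
      intro j
      ext b
      simp only [Set.mem_image, Set.mem_preimage, Set.mem_singleton_iff]
      constructor
      · rintro ⟨a, ha, rfl⟩; rw [hφσE, ha]
      · intro hb
        refine ⟨σE.symm b, ?_, σE.apply_symm_apply b⟩
        have := hφσE' b
        rw [hb] at this
        exact τJ.injective this
    have hmemS : σE ∈ Stab := (hStab' σE).mpr fun j => ⟨τJ j, him j⟩
    refine ⟨⟨σE, hmemS⟩, ?_⟩
    funext i
    apply Equiv.ext
    rintro ⟨j, hj⟩
    apply Subtype.ext
    show F ⟨σE, hmemS⟩ j = _
    have h1 : F ⟨σE, hmemS⟩ j = τJ j := by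
      show f ⟨σE, hmemS⟩ j = τJ j
      show φ (σE (s j)) = τJ j
      rw [hφσE, hs]
    rw [h1, hτapp j]
    obtain ⟨m, hm⟩ := i
    have hj' : Nat.card (φ ⁻¹' {j} : Set (Fin n)) = m := hj
    subst hj'
    show ((ρ (Nat.card (φ ⁻¹' {j} : Set (Fin n))) ⟨j, rfl⟩ : _) : J) = _
    rw [show ρ (Nat.card (φ ⁻¹' {j} : Set (Fin n))) = κ ⟨Nat.card (φ ⁻¹' {j} : Set (Fin n)), hm⟩
      from dif_pos hm]
  -- assemble
  have hnormal : N.Normal := by rw [hNeq]; exact MonoidHom.normal_ker Φ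
  refine ⟨hnormal, ?_⟩
  haveI := hnormal
  exact ⟨(QuotientGroup.quotientMulEquivOfEq hNeq).trans
    (QuotientGroup.quotientKerEquivOfSurjective Φ hΦsurj)⟩
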